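/- Let N ≥ 4 and let r = r₁r₂r₃ ∈ {0,1}³ be a single rule. For every position i with 1 ≤ i ≤ N−1, there exists a contiguous length-2 substring r' of r (r' = r₁r₂ or r' = r₂r₃) such that φ^{i,i+1}_{r'} ≥ φ^{i,i+1}_z for every z ∈ {0,1}². -/

import Mathlib

/-- `occCount a x` : number of starting positions at which the rule `a` (a binary
string of length `k`) occurs as a contiguous substring of the binary string `x`
of length `N`.  This is the value `F_N(a)(x)` of the transform. -/
def occCount {k N : ℕ} (a : Fin k → Bool) (x : Fin N → Bool) : ℕ :=
  ((List.range (N - k + 1)).filter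
    (fun i => (List.ofFn a).isPrefixOf ((List.ofFn x).drop i))).length

/-- The duplet moment `φ^{p,q}_{x₁x₂}` for the single rule `r`:
the sum of `f_r(y) = F_N(r)(y)` over all strings `y` with `y p = x₁`, `y q = x₂`. -/
def duplet {N : ℕ} (r : Fin 3 → Bool) (p q : Fin N) (x1 x2 : Bool) : ℕ :=
  ∑ y : Fin N → Bool, if y p = x1 ∧ y q = x2 then occCount r y else 0

open Finset

/-- `y` satisfies a list of (position, value) constraints. -/
def SatC {N : ℕ} (y : Fin N → Bool) (l : List (ℕ × Bool)) : Prop :=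
  ∀ pr ∈ l, ∀ t : Fin N, (t : ℕ) = pr.1 → y t = pr.2

instance {N : ℕ} (y : Fin N → Bool) (l : List (ℕ × Bool)) : Decidable (SatC y l) := by
  unfold SatC; infer_instance

lemma satC_nil {N : ℕ} (y : Fin N → Bool) : SatC y [] ↔ True := by simp [SatC]

lemma satC_cons {N : ℕ} (y : Fin N → Bool) (a : ℕ) (b : Bool) (l : List (ℕ × Bool)) :
    SatC y ((a, b) :: l) ↔ (∀ t : Fin N, (t : ℕ) = a → y t = b) ∧ SatC y l := by
  simp [SatC]

lemma count_satC {N : ℕ} (l : List (ℕ × Bool)) (hnd : (l.map Prod.fst).Nodup)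
    (hlt : ∀ pr ∈ l, pr.1 < N) :
    (∑ y : Fin N → Bool, if SatC y l then (1 : ℕ) else 0) = 2 ^ (N - l.length) := by
  have h1 : ∀ y : Fin N → Bool, (if SatC y l then (1 : ℕ) else 0) =
      ∏ t : Fin N, (if (∀ pr ∈ l, (t : ℕ) = pr.1 → y t = pr.2) then 1 else 0) := by
    intro y
    rw [Fintype.prod_boole]
    congr 1
    refine propext ⟨fun h t pr hpr ht => h pr hpr t ht, fun h pr hpr t ht => h t pr hpr ht⟩
  simp_rw [h1]
  rw [← Fintype.prod_sum (fun (t : Fin N) (b : Bool) =>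
    if (∀ pr ∈ l, (t : ℕ) = pr.1 → b = pr.2) then (1 : ℕ) else 0)]
  have h2 : ∀ t : Fin N, (∑ b : Bool, if (∀ pr ∈ l, (t : ℕ) = pr.1 → b = pr.2) then (1 : ℕ) else 0)
      = if (t : ℕ) ∈ l.map Prod.fst then 1 else 2 := by
    intro t
    by_cases hm : (t : ℕ) ∈ l.map Prod.fst
    · simp only [if_pos hm]
      obtain ⟨pr0, hpr0, hfst⟩ := List.mem_map.mp hm
      have huniq : ∀ pr ∈ l, (t : ℕ) = pr.1 → pr.2 = pr0.2 := by
        intro pr hpr ht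
        have := List.inj_on_of_nodup_map hnd hpr hpr0 (by rw [← ht, hfst])
        rw [this]
      have : ∀ b : Bool, (∀ pr ∈ l, (t : ℕ) = pr.1 → b = pr.2) ↔ b = pr0.2 := by
        intro b
        constructor
        · intro h; exact h pr0 hpr0 hfst.symm
        · intro hb pr hpr ht; rw [hb, huniq pr hpr ht]
      simp_rw [this]
      simp
    · have : ∀ b : Bool, (∀ pr ∈ l, (t : ℕ) = pr.1 → b = pr.2) := by
        intro b pr hpr ht
        exact absurd (List.mem_map.mpr ⟨pr, hpr, ht.symm⟩) hm
      rw [if_neg hm]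
      rw [Finset.sum_congr rfl (fun b _ => if_pos (this b))]
      simp
  simp_rw [h2]
  rw [Finset.prod_ite]
  simp only [Finset.prod_const, one_pow, one_mul]
  have hcard : (Finset.univ.filter (fun t : Fin N => (t : ℕ) ∈ l.map Prod.fst)).card
      = l.length := by
    have hlt' : ∀ m ∈ (l.map Prod.fst).toFinset, m < N := by
      intro m hm
      obtain ⟨pr, hpr, rfl⟩ := List.mem_map.mp (List.mem_toFinset.mp hm)
      exact hlt pr hpr
    have : (Finset.univ.filter (fun t : Fin N => (t : ℕ) ∈ l.map Prod.fst))
        = Finset.attachFin (l.map Prod.fst).toFinset hlt' := by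
      ext t
      simp [Finset.mem_attachFin]
    rw [this, Finset.card_attachFin, List.toFinset_card_of_nodup hnd, List.length_map]
  have hcard2 : (Finset.univ.filter (fun t : Fin N => ¬ (t : ℕ) ∈ l.map Prod.fst)).card
      = N - l.length := by
    have := Finset.card_filter_add_card_filter_not
      (s := (Finset.univ : Finset (Fin N))) (p := fun t : Fin N => (t : ℕ) ∈ l.map Prod.fst)
    simp only [Finset.card_univ, Fintype.card_fin] at this
    omega
  rw [hcard2]

lemma pin_iff {N : ℕ} (y : Fin N → Bool) {a : ℕ} (ha : a < N) (b : Bool) :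
    (∀ t : Fin N, (t : ℕ) = a → y t = b) ↔ y ⟨a, ha⟩ = b := by
  constructor
  · intro h; exact h ⟨a, ha⟩ rfl
  · intro h t ht
    have : t = ⟨a, ha⟩ := Fin.ext ht
    rw [this, h]

lemma length_filter_range (M : ℕ) (p : ℕ → Bool) :
    ((List.range M).filter p).length = ∑ j ∈ Finset.range M, if p j then 1 else 0 := by
  induction M with
  | zero => simp
  | succ M ih =>
    rw [List.range_succ, List.filter_append, List.length_append, ih, Finset.sum_range_succ]
    by_cases h : p M <;> simp [h]

lemma occCount_eq {N : ℕ} (hN : 3 ≤ N) (r : Fin 3 → Bool) (y : Fin N → Bool) :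
    occCount r y = ∑ j ∈ Finset.range (N - 2),
      if SatC y [(j, r 0), (j + 1, r 1), (j + 2, r 2)] then 1 else 0 := by
  unfold occCount
  have h32 : N - 3 + 1 = N - 2 := by omega
  rw [h32, length_filter_range]
  apply Finset.sum_congr rfl
  intro j hj
  have hj2 : j < N - 2 := Finset.mem_range.mp hj
  have hlen : (List.ofFn y).length = N := by simp
  have h0 : j < N := by omega
  have h1 : j + 1 < N := by omega
  have h2 : j + 2 < N := by omega
  have hofn : (List.ofFn r) = [r 0, r 1, r 2] := by
    simp [List.ofFn_succ]
  have hdrop : (List.ofFn y).drop j = y ⟨j, h0⟩ :: y ⟨j+1, h1⟩ :: y ⟨j+2, h2⟩ ::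
      (List.ofFn y).drop (j+3) := by
    rw [List.drop_eq_getElem_cons (by omega), List.drop_eq_getElem_cons (by omega),
      List.drop_eq_getElem_cons (by omega)]
    simp
  rw [hofn, hdrop]
  have : ([r 0, r 1, r 2].isPrefixOf (y ⟨j, h0⟩ :: y ⟨j+1, h1⟩ :: y ⟨j+2, h2⟩ ::
      (List.ofFn y).drop (j+3))) = (r 0 == y ⟨j, h0⟩ && (r 1 == y ⟨j+1, h1⟩ &&
      r 2 == y ⟨j+2, h2⟩)) := by
    simp [List.isPrefixOf]
  rw [this]
  have hsat : SatC y [(j, r 0), (j + 1, r 1), (j + 2, r 2)] ↔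
      (y ⟨j, h0⟩ = r 0 ∧ y ⟨j+1, h1⟩ = r 1 ∧ y ⟨j+2, h2⟩ = r 2) := by
    rw [satC_cons, satC_cons, satC_cons, pin_iff y h0, pin_iff y h1, pin_iff y h2]
    simp [SatC]
  have hiff : ((r 0 == y ⟨j, h0⟩ && (r 1 == y ⟨j+1, h1⟩ && r 2 == y ⟨j+2, h2⟩)) = true) ↔
      SatC y [(j, r 0), (j + 1, r 1), (j + 2, r 2)] := by
    rw [hsat]
    simp only [Bool.and_eq_true, beq_iff_eq]
    constructor
    · rintro ⟨a, b, c⟩; exact ⟨a.symm, b.symm, c.symm⟩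
    · rintro ⟨a, b, c⟩; exact ⟨a.symm, b.symm, c.symm⟩
  simp only [hiff]

lemma count_window {N : ℕ} (hN : 4 ≤ N) (r : Fin 3 → Bool) (i j : ℕ)
    (hi1 : 1 ≤ i) (hi2 : i ≤ N - 1) (hj : j < N - 2) (z1 z2 : Bool) :
    (∑ y : Fin N → Bool,
      if SatC y [(i-1, z1), (i, z2), (j, r 0), (j+1, r 1), (j+2, r 2)] then (1:ℕ) else 0)
    = if j + 4 ≤ i ∨ i < j then 2^(N-5)
      else if j + 3 = i then (if z1 = r 2 then 2^(N-4) else 0)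
      else if j + 2 = i then (if z1 = r 1 ∧ z2 = r 2 then 2^(N-3) else 0)
      else if j + 1 = i then (if z1 = r 0 ∧ z2 = r 1 then 2^(N-3) else 0)
      else (if z2 = r 0 then 2^(N-4) else 0) := by
  have hiN : i < N := by omega
  have hi1N : i - 1 < N := by omega
  have hjN : j + 2 < N := by omega
  by_cases hgen : j + 4 ≤ i ∨ i < j
  · rw [if_pos hgen]
    rw [count_satC _ (by simp; omega) (by simp; omega)]
    norm_num
  rw [if_neg hgen]
  push_neg at hgen
  by_cases hb : j + 3 = i
  · rw [if_pos hb]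
    by_cases hz : z1 = r 2
    · rw [if_pos hz]
      have key : ∀ y : Fin N → Bool,
          SatC y [(i-1, z1), (i, z2), (j, r 0), (j+1, r 1), (j+2, r 2)] ↔
          SatC y [(i-1, z1), (i, z2), (j, r 0), (j+1, r 1)] := by
        intro y
        simp only [satC_cons, satC_nil, and_true]
        constructor
        · rintro ⟨a, b, c, d, e⟩; exact ⟨a, b, c, d⟩
        · rintro ⟨a, b, c, d⟩
          refine ⟨a, b, c, d, ?_⟩
          intro t ht
          rw [a t (by omega), hz]
      simp only [key]
      rw [count_satC _ (by simp; omega) (by simp; omega)]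
      norm_num
    · rw [if_neg hz]
      apply Finset.sum_eq_zero
      intro y _
      rw [if_neg]
      intro hs
      simp only [satC_cons, satC_nil, and_true] at hs
      obtain ⟨a, -, -, -, e⟩ := hs
      exact hz ((a ⟨j+2, by omega⟩ (by simp; omega)).symm.trans (e ⟨j+2, by omega⟩ rfl))
  rw [if_neg hb]
  by_cases hc : j + 2 = i
  · rw [if_pos hc]
    by_cases hz : z1 = r 1 ∧ z2 = r 2
    · rw [if_pos hz]
      have key : ∀ y : Fin N → Bool,
          SatC y [(i-1, z1), (i, z2), (j, r 0), (j+1, r 1), (j+2, r 2)] ↔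
          SatC y [(i-1, z1), (i, z2), (j, r 0)] := by
        intro y
        simp only [satC_cons, satC_nil, and_true]
        constructor
        · rintro ⟨a, b, c, d, e⟩; exact ⟨a, b, c⟩
        · rintro ⟨a, b, c⟩
          refine ⟨a, b, c, ?_, ?_⟩
          · intro t ht; rw [a t (by omega), hz.1]
          · intro t ht; rw [b t (by omega), hz.2]
      simp only [key]
      rw [count_satC _ (by simp; omega) (by simp; omega)]
      norm_num
    · rw [if_neg hz]
      apply Finset.sum_eq_zero
      intro y _
      rw [if_neg]
      intro hs
      simp only [satC_cons, satC_nil, and_true] at hs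
      obtain ⟨a, b, -, d, e⟩ := hs
      apply hz
      constructor
      · exact ((a ⟨j+1, by omega⟩ (by simp; omega)).symm.trans (d ⟨j+1, by omega⟩ rfl))
      · exact ((b ⟨j+2, by omega⟩ (by simp; omega)).symm.trans (e ⟨j+2, by omega⟩ rfl))
  rw [if_neg hc]
  by_cases hd : j + 1 = i
  · rw [if_pos hd]
    by_cases hz : z1 = r 0 ∧ z2 = r 1
    · rw [if_pos hz]
      have key : ∀ y : Fin N → Bool,
          SatC y [(i-1, z1), (i, z2), (j, r 0), (j+1, r 1), (j+2, r 2)] ↔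
          SatC y [(i-1, z1), (i, z2), (j+2, r 2)] := by
        intro y
        simp only [satC_cons, satC_nil, and_true]
        constructor
        · rintro ⟨a, b, c, d, e⟩; exact ⟨a, b, e⟩
        · rintro ⟨a, b, e⟩
          refine ⟨a, b, ?_, ?_, e⟩
          · intro t ht; rw [a t (by omega), hz.1]
          · intro t ht; rw [b t (by omega), hz.2]
      simp only [key]
      rw [count_satC _ (by simp; omega) (by simp; omega)]
      norm_num
    · rw [if_neg hz]
      apply Finset.sum_eq_zero
      intro y _
      rw [if_neg]
      intro hs
      simp only [satC_cons, satC_nil, and_true] at hs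
      obtain ⟨a, b, c, d, -⟩ := hs
      apply hz
      constructor
      · exact ((a ⟨j, by omega⟩ (by simp; omega)).symm.trans (c ⟨j, by omega⟩ rfl))
      · exact ((b ⟨j+1, by omega⟩ (by simp; omega)).symm.trans (d ⟨j+1, by omega⟩ rfl))
  rw [if_neg hd]
  have he : j = i := by omega
  by_cases hz : z2 = r 0
  · rw [if_pos hz]
    have key : ∀ y : Fin N → Bool,
        SatC y [(i-1, z1), (i, z2), (j, r 0), (j+1, r 1), (j+2, r 2)] ↔
        SatC y [(i-1, z1), (i, z2), (j+1, r 1), (j+2, r 2)] := by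
      intro y
      simp only [satC_cons, satC_nil, and_true]
      constructor
      · rintro ⟨a, b, c, d, e⟩; exact ⟨a, b, d, e⟩
      · rintro ⟨a, b, d, e⟩
        refine ⟨a, b, ?_, d, e⟩
        intro t ht; rw [b t (by omega), hz]
    simp only [key]
    rw [count_satC _ (by simp; omega) (by simp; omega)]
    norm_num
  · rw [if_neg hz]
    apply Finset.sum_eq_zero
    intro y _
    rw [if_neg]
    intro hs
    simp only [satC_cons, satC_nil, and_true] at hs
    obtain ⟨-, b, c, -, -⟩ := hs
    exact hz ((b ⟨j, by omega⟩ (by simp; omega)).symm.trans (c ⟨j, by omega⟩ rfl))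

lemma sum_indicator_eq (M c i : ℕ) (a : ℕ) :
    (∑ j ∈ Finset.range M, if j + c = i then a else 0)
      = if c ≤ i ∧ i - c < M then a else 0 := by
  by_cases h : c ≤ i ∧ i - c < M
  · rw [if_pos h]
    have : ∀ j ∈ Finset.range M, (if j + c = i then a else 0) = (if j = i - c then a else 0) := by
      intro j _
      congr 1
      exact propext (by omega)
    rw [Finset.sum_congr rfl this, Finset.sum_ite_eq' (Finset.range M) (i - c) (fun _ => a),
      if_pos (Finset.mem_range.mpr h.2)]
  · rw [if_neg h]
    apply Finset.sum_eq_zero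
    intro j hj
    rw [if_neg]
    have := Finset.mem_range.mp hj
    omega

lemma duplet_formula {N : ℕ} (hN : 4 ≤ N) (r : Fin 3 → Bool) (i : ℕ)
    (hi1 : 1 ≤ i) (hi2 : i ≤ N - 1) (z1 z2 : Bool) :
    duplet r (⟨i - 1, by have _ := hN; omega⟩ : Fin N) (⟨i, by have _ := hN; omega⟩ : Fin N) z1 z2 =
      (∑ j ∈ Finset.range (N-2), if j + 4 ≤ i ∨ i < j then 2^(N-5) else 0)
      + (if 3 ≤ i then (if z1 = r 2 then 2^(N-4) else 0) else 0)
      + (if 2 ≤ i then (if z1 = r 1 ∧ z2 = r 2 then 2^(N-3) else 0) else 0)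
      + (if i ≤ N - 2 then (if z1 = r 0 ∧ z2 = r 1 then 2^(N-3) else 0) else 0)
      + (if i ≤ N - 3 then (if z2 = r 0 then 2^(N-4) else 0) else 0) := by
  have hi1N : i - 1 < N := by omega
  have hiN : i < N := by omega
  have hsplit : ∀ (y : Fin N → Bool) (j : ℕ),
      SatC y [(i-1, z1), (i, z2), (j, r 0), (j+1, r 1), (j+2, r 2)] ↔
      ((y ⟨i - 1, hi1N⟩ = z1 ∧ y ⟨i, hiN⟩ = z2) ∧
        SatC y [(j, r 0), (j+1, r 1), (j+2, r 2)]) := by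
    intro y j
    simp only [satC_cons, satC_nil, and_true, pin_iff y hi1N, pin_iff y hiN]
    tauto
  have step1 : duplet r (⟨i - 1, by have _ := hN; omega⟩ : Fin N) (⟨i, by have _ := hN; omega⟩ : Fin N) z1 z2 =
      ∑ j ∈ Finset.range (N-2), ∑ y : Fin N → Bool,
        if SatC y [(i-1, z1), (i, z2), (j, r 0), (j+1, r 1), (j+2, r 2)] then 1 else 0 := by
    unfold duplet
    rw [← Finset.sum_comm]
    apply Finset.sum_congr rfl
    intro y _
    rw [occCount_eq (by omega) r y]
    by_cases hp : y (⟨i - 1, by have _ := hN; omega⟩ : Fin N) = z1 ∧ y (⟨i, by have _ := hN; omega⟩ : Fin N) = z2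
    · rw [if_pos hp]
      apply Finset.sum_congr rfl
      intro j _
      exact if_congr (((hsplit y j).trans (and_iff_right hp)).symm) rfl rfl
    · rw [if_neg hp]
      symm
      apply Finset.sum_eq_zero
      intro j _
      rw [if_neg]
      intro hs
      exact hp ((hsplit y j).mp hs).1
  rw [step1]
  have step2 : ∀ j ∈ Finset.range (N-2),
      (∑ y : Fin N → Bool,
        if SatC y [(i-1, z1), (i, z2), (j, r 0), (j+1, r 1), (j+2, r 2)] then 1 else 0)
      = (if j + 4 ≤ i ∨ i < j then 2^(N-5) else 0)
        + (if j + 3 = i then (if z1 = r 2 then 2^(N-4) else 0) else 0)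
        + (if j + 2 = i then (if z1 = r 1 ∧ z2 = r 2 then 2^(N-3) else 0) else 0)
        + (if j + 1 = i then (if z1 = r 0 ∧ z2 = r 1 then 2^(N-3) else 0) else 0)
        + (if j + 0 = i then (if z2 = r 0 then 2^(N-4) else 0) else 0) := by
    intro j hj
    have hjr := Finset.mem_range.mp hj
    rw [count_window hN r i j hi1 hi2 hjr]
    split_ifs <;> omega
  rw [Finset.sum_congr rfl step2]
  simp only [Finset.sum_add_distrib]
  rw [sum_indicator_eq (N-2) 3 i, sum_indicator_eq (N-2) 2 i, sum_indicator_eq (N-2) 1 i,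
    sum_indicator_eq (N-2) 0 i]
  have c3 : (3 ≤ i ∧ i - 3 < N - 2) = (3 ≤ i) := propext (by omega)
  have c2 : (2 ≤ i ∧ i - 2 < N - 2) = (2 ≤ i) := propext (by omega)
  have c1 : (1 ≤ i ∧ i - 1 < N - 2) = (i ≤ N - 2) := propext (by omega)
  have c0 : (0 ≤ i ∧ i - 0 < N - 2) = (i ≤ N - 3) := propext (by omega)
  simp only [c3, c2, c1, c0]

theorem stmt1 (N : ℕ) (hN : 4 ≤ N) (r : Fin 3 → Bool)
    (i : ℕ) (hi1 : 1 ≤ i) (hi2 : i ≤ N - 1) :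
    ∃ x1 x2 : Bool, ((x1 = r 0 ∧ x2 = r 1) ∨ (x1 = r 1 ∧ x2 = r 2)) ∧
      ∀ z1 z2 : Bool,
        duplet r (⟨i - 1, by omega⟩ : Fin N) (⟨i, by omega⟩ : Fin N) z1 z2 ≤
          duplet r (⟨i - 1, by omega⟩ : Fin N) (⟨i, by omega⟩ : Fin N) x1 x2 := by
  have key := duplet_formula hN r i hi1 hi2
  set SG := ∑ j ∈ Finset.range (N-2), if j + 4 ≤ i ∨ i < j then 2^(N-5) else 0 with hSG
  set u := (2:ℕ)^(N-4) with hu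
  have h2u : (2:ℕ)^(N-3) = 2*u := by
    rw [hu, show N-3 = (N-4)+1 by omega, pow_succ]; ring
  simp only [h2u] at key
  by_cases hle : duplet r (⟨i - 1, by omega⟩ : Fin N) (⟨i, by omega⟩ : Fin N) (r 0) (r 1) ≤
      duplet r (⟨i - 1, by omega⟩ : Fin N) (⟨i, by omega⟩ : Fin N) (r 1) (r 2)
  · refine ⟨r 1, r 2, Or.inr ⟨rfl, rfl⟩, ?_⟩
    have hstar : SG + 2*u ≤
        duplet r (⟨i - 1, by omega⟩ : Fin N) (⟨i, by omega⟩ : Fin N) (r 1) (r 2) := by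
      by_cases h2i : 2 ≤ i
      · rw [key (r 1) (r 2), if_pos h2i, if_pos (⟨rfl, rfl⟩ : r 1 = r 1 ∧ r 2 = r 2)]
        omega
      · refine le_trans ?_ hle
        rw [key (r 0) (r 1), if_pos (show i ≤ N - 2 by omega),
          if_pos (⟨rfl, rfl⟩ : r 0 = r 0 ∧ r 1 = r 1)]
        omega
    intro z1 z2
    by_cases hA : z1 = r 1 ∧ z2 = r 2
    · rw [hA.1, hA.2]
    by_cases hB : z1 = r 0 ∧ z2 = r 1
    · rw [hB.1, hB.2]; exact hle
    refine le_trans ?_ hstar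
    rw [key z1 z2]
    simp only [if_neg hA, if_neg hB, ite_self]
    have b1 : (if 3 ≤ i then (if z1 = r 2 then u else 0) else 0) ≤ u := by
      split_ifs <;> omega
    have b4 : (if i ≤ N - 3 then (if z2 = r 0 then u else 0) else 0) ≤ u := by
      split_ifs <;> omega
    omega
  · refine ⟨r 0, r 1, Or.inl ⟨rfl, rfl⟩, ?_⟩
    have hle' := le_of_not_ge hle
    have hstar : SG + 2*u ≤
        duplet r (⟨i - 1, by omega⟩ : Fin N) (⟨i, by omega⟩ : Fin N) (r 0) (r 1) := by
      by_cases hNi : i ≤ N - 2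
      · rw [key (r 0) (r 1), if_pos hNi, if_pos (⟨rfl, rfl⟩ : r 0 = r 0 ∧ r 1 = r 1)]
        omega
      · refine le_trans ?_ hle'
        rw [key (r 1) (r 2), if_pos (show 2 ≤ i by omega),
          if_pos (⟨rfl, rfl⟩ : r 1 = r 1 ∧ r 2 = r 2)]
        omega
    intro z1 z2
    by_cases hB : z1 = r 0 ∧ z2 = r 1
    · rw [hB.1, hB.2]
    by_cases hA : z1 = r 1 ∧ z2 = r 2
    · rw [hA.1, hA.2]; exact hle'
    refine le_trans ?_ hstar
    rw [key z1 z2]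
    simp only [if_neg hA, if_neg hB, ite_self]
    have b1 : (if 3 ≤ i then (if z1 = r 2 then u else 0) else 0) ≤ u := by
      split_ifs <;> omega
    have b4 : (if i ≤ N - 3 then (if z2 = r 0 then u else 0) else 0) ≤ u := by
      split_ifs <;> omega
    omega
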